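/- arXiv:2304.03956 — 2 statements merged into one kernel-verified Lean document; each statement's English description precedes it below -/
import Mathlib

section
/- Let R be a commutative noetherian ring, let F be an R-linear functor from the category of R-modules to itself, and let p be a prime ideal of R. If the localization F(E_R(R/p))_p is the zero module, then F(E_R(R/p)) itself is the zero module. -/
open CategoryTheory

universe u

noncomputable def extGroup (R : Type u) [CommRing R] (n : ℕ) (M N : Type u)
    [AddCommGroup M] [Module R M] [AddCommGroup N] [Module R N] : Type u :=
  (((Ext R (ModuleCat.{u} R) n).obj (Opposite.op (ModuleCat.of R M))).obj (ModuleCat.of R N)).carrier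

noncomputable instance (R : Type u) [CommRing R] (n : ℕ) (M N : Type u)
    [AddCommGroup M] [Module R M] [AddCommGroup N] [Module R N] :
    AddCommGroup (extGroup R n M N) :=
  inferInstanceAs (AddCommGroup (((Ext R (ModuleCat.{u} R) n).obj
    (Opposite.op (ModuleCat.of R M))).obj (ModuleCat.of R N)).carrier)

noncomputable instance (R : Type u) [CommRing R] (n : ℕ) (M N : Type u)
    [AddCommGroup M] [Module R M] [AddCommGroup N] [Module R N] :
    Module R (extGroup R n M N) :=
  inferInstanceAs (Module R (((Ext R (ModuleCat.{u} R) n).obj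
    (Opposite.op (ModuleCat.of R M))).obj (ModuleCat.of R N)).carrier)

noncomputable def torGroup (R : Type u) [CommRing R] (n : ℕ) (M N : Type u)
    [AddCommGroup M] [Module R M] [AddCommGroup N] [Module R N] : Type u :=
  (((Tor (ModuleCat.{u} R) n).obj (ModuleCat.of R M)).obj (ModuleCat.of R N)).carrier

noncomputable instance (R : Type u) [CommRing R] (n : ℕ) (M N : Type u)
    [AddCommGroup M] [Module R M] [AddCommGroup N] [Module R N] :
    AddCommGroup (torGroup R n M N) :=
  inferInstanceAs (AddCommGroup (((Tor (ModuleCat.{u} R) n).obj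
    (ModuleCat.of R M)).obj (ModuleCat.of R N)).carrier)

noncomputable instance (R : Type u) [CommRing R] (n : ℕ) (M N : Type u)
    [AddCommGroup M] [Module R M] [AddCommGroup N] [Module R N] :
    Module R (torGroup R n M N) :=
  inferInstanceAs (Module R (((Tor (ModuleCat.{u} R) n).obj
    (ModuleCat.of R M)).obj (ModuleCat.of R N)).carrier)

/-- The depth of a module over a noetherian local ring, via Rees's characterization:
the infimum of the set of integers `i` with `Ext^i(k, M) ≠ 0`. -/
noncomputable def moduleDepth (R : Type u) [CommRing R] [IsLocalRing R]
    (M : Type u) [AddCommGroup M] [Module R M] : ℕ∞ :=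
  sInf {n : ℕ∞ | ∃ i : ℕ, n = i ∧ Nontrivial (extGroup R i (IsLocalRing.ResidueField R) M)}

noncomputable def ringDepth (R : Type u) [CommRing R] [IsLocalRing R] : ℕ∞ :=
  moduleDepth R R

/-- Serre's condition `(S₂)` for a commutative ring. -/
def SerreS2Ring (R : Type u) [CommRing R] : Prop :=
  ∀ p : PrimeSpectrum R,
    min 2 (Order.height p) ≤ ringDepth (Localization.AtPrime p.asIdeal)

/-- Serre's condition `(S₂)` for a module. -/
def SerreS2Module (R : Type u) [CommRing R] (M : Type u) [AddCommGroup M] [Module R M] : Prop :=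
  ∀ p : PrimeSpectrum R,
    min 2 (Order.height p) ≤
      moduleDepth (Localization.AtPrime p.asIdeal) (LocalizedModule p.asIdeal.primeCompl M)

/-- A finite free presentation of a module. -/
structure FreePresentation (R : Type u) [CommRing R] (M : Type u)
    [AddCommGroup M] [Module R M] where
  rank₀ : ℕ
  rank₁ : ℕ
  pres : (Fin rank₁ → R) →ₗ[R] (Fin rank₀ → R)
  aug : (Fin rank₀ → R) →ₗ[R] M
  aug_surjective : Function.Surjective aug
  exact : LinearMap.range pres = LinearMap.ker aug

/-- The (Auslander) transpose of a module with respect to a free presentation: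
the cokernel of the `R`-dual of the presentation map. -/
abbrev FreePresentation.Transpose {R : Type u} [CommRing R] {M : Type u}
    [AddCommGroup M] [Module R M] (P : FreePresentation R M) : Type u :=
  ((Fin P.rank₁ → R) →ₗ[R] R) ⧸ LinearMap.range (P.pres.dualMap)

/-- `IsSyzygy R N t M` means that `N` is a `t`-th syzygy of `M` obtained from
surjections from finite free modules. -/
def IsSyzygy (R : Type u) [CommRing R] (N : Type u) [AddCommGroup N] [Module R N] :
    (t : ℕ) → (M : Type u) → [AddCommGroup M] → [Module R M] → Prop
  | 0, M, _, _ => Nonempty (N ≃ₗ[R] M)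
  | (t+1), M, _, _ => ∃ (k : ℕ) (f : (Fin k → R) →ₗ[R] M), Function.Surjective f ∧
      IsSyzygy R N t (LinearMap.ker f)

/-- A module has finite projective dimension iff `Ext^i(M, -)` vanishes for all
sufficiently large `i`. -/
def HasFiniteProjDim (R : Type u) [CommRing R] (M : Type u)
    [AddCommGroup M] [Module R M] : Prop :=
  ∃ n : ℕ, ∀ (N : Type u) [AddCommGroup N] [Module R N], ∀ i : ℕ, n < i →
    Subsingleton (extGroup R i M N)

/-- A noetherian local ring is regular if its maximal ideal is generated by
`dim R` elements. -/
def IsRegularLocal (A : Type u) [CommRing A] [IsLocalRing A] : Prop :=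
  IsNoetherianRing A ∧ ∃ s : Finset A,
    Ideal.span (s : Set A) = IsLocalRing.maximalIdeal A ∧
      (s.card : WithBot ℕ∞) = ringKrullDim A

/-- A witness that the local ring `A` is a complete intersection: its maximal-adic
completion is the quotient of a regular local ring by a regular sequence. -/
structure CompleteIntersectionWitness (A : Type u) [CommRing A] [IsLocalRing A] :
    Type (u + 1) where
  B : Type u
  [commRingB : CommRing B]
  [isLocalRingB : IsLocalRing B]
  regular : IsRegularLocal B
  seq : List B
  seq_regular : RingTheory.Sequence.IsRegular B seq
  equiv : AdicCompletion (IsLocalRing.maximalIdeal A) A ≃+* B ⧸ Ideal.span {x | x ∈ seq}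

/-- A noetherian local ring is a complete intersection if its completion is the
quotient of a regular local ring by an ideal generated by a regular sequence. -/
def IsCompleteIntersectionLocalRing (A : Type u) [CommRing A] [IsLocalRing A] : Prop :=
  Nonempty (CompleteIntersectionWitness A)

/-- Membership in the class `G_{m,n}`. -/
def MemG (R : Type u) [CommRing R] (M : Type u) [AddCommGroup M] [Module R M]
    (m n : ℕ∞) : Prop :=
  (∀ i : ℕ, 1 ≤ i → (i : ℕ∞) ≤ m → Subsingleton (extGroup R i M R)) ∧
  (∀ P : FreePresentation R M, ∀ j : ℕ, 1 ≤ j → (j : ℕ∞) ≤ n →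
    Subsingleton (extGroup R j P.Transpose R))


/-- If `F` is an `R`-linear functor on the category of `R`-modules,
`p` is a prime ideal and `E` is an injective hull of `R/p`, then `F(E)ₚ = 0`
implies `F(E) = 0`. -/
theorem functor_injective_hull_zero_of_localization_zero
    (R : Type u) [CommRing R] [IsNoetherianRing R]
    (F : ModuleCat.{u} R ⥤ ModuleCat.{u} R) [F.Additive] [F.Linear R]
    (p : PrimeSpectrum R)
    (E : Type u) [AddCommGroup E] [Module R E] (hE : Module.Injective R E)
    (ι : (R ⧸ p.asIdeal) →ₗ[R] E) (hι : Function.Injective ι)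
    (hess : ∀ N : Submodule R E, N ⊓ LinearMap.range ι = ⊥ → N = ⊥)
    (h : Subsingleton
      (LocalizedModule p.asIdeal.primeCompl (F.obj (ModuleCat.of R E)).carrier)) :
    Subsingleton (F.obj (ModuleCat.of R E)).carrier := by
  haveI : p.asIdeal.IsPrime := p.2
  -- key zero lemma on E
  have hzero : ∀ s : p.asIdeal.primeCompl, ∀ x : E, (s : R) • x = 0 →
      x ∈ LinearMap.range ι → x = 0 := by
    rintro s x hx ⟨y, rfl⟩
    obtain ⟨y, rfl⟩ := Ideal.Quotient.mk_surjective y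
    have hms : Ideal.Quotient.mk p.asIdeal ((s : R) * y)
        = (s : R) • Ideal.Quotient.mk p.asIdeal y := rfl
    have h1 : ι (Ideal.Quotient.mk p.asIdeal ((s : R) * y)) = 0 := by
      rw [hms, map_smul, hx]
    have h2 : Ideal.Quotient.mk p.asIdeal ((s : R) * y) = 0 := by
      apply hι; simpa using h1
    rw [map_mul] at h2
    have hs0 : Ideal.Quotient.mk p.asIdeal (s : R) ≠ 0 := fun h0 =>
      s.2 (Ideal.Quotient.eq_zero_iff_mem.mp h0)
    rcases mul_eq_zero.mp h2 with h3 | h3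
    · exact absurd h3 hs0
    · rw [h3, map_zero]
  -- multiplication by s is bijective on E
  have key : ∀ s : p.asIdeal.primeCompl,
      Function.Bijective ((s : R) • (LinearMap.id : E →ₗ[R] E)) := by
    intro s
    set g : E →ₗ[R] E := (s : R) • LinearMap.id with hgdef
    have hgx : ∀ x : E, g x = (s : R) • x := fun x => rfl
    have ginj : Function.Injective g := by
      rw [← LinearMap.ker_eq_bot]
      apply hess
      rw [Submodule.eq_bot_iff]
      rintro x ⟨hx1, hx2⟩
      exact hzero s x hx1 hx2
    refine ⟨ginj, ?_⟩
    obtain ⟨hmap, hcomp⟩ := hE.out g ginj LinearMap.id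
    set q : E →ₗ[R] E := g ∘ₗ hmap with hqdef
    have hq_range : ∀ z : E, q (g z) = g z := by
      intro z
      simp only [hqdef, LinearMap.comp_apply, hcomp]
      rfl
    have hker : LinearMap.ker q = ⊥ := by
      apply hess
      rw [Submodule.eq_bot_iff]
      rintro x ⟨hx1, hx2⟩
      apply hzero s x _ hx2
      have : q ((s : R) • x) = (s : R) • x := by
        rw [← hgx]; exact hq_range x
      rw [map_smul, LinearMap.mem_ker.mp hx1, smul_zero] at this
      exact this.symm
    intro x
    refine ⟨hmap x, ?_⟩
    have : x - q x ∈ LinearMap.ker q := by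
      rw [LinearMap.mem_ker, map_sub]
      have : q (q x) = q x := hq_range (hmap x)
      rw [this, sub_self]
    rw [hker, Submodule.mem_bot, sub_eq_zero] at this
    exact this.symm
  -- multiplication by s is injective on F(E)
  set X : ModuleCat.{u} R := ModuleCat.of R E with hX
  have keyF : ∀ s : p.asIdeal.primeCompl,
      ∀ x : (F.obj X).carrier, (s : R) • x = 0 → x = 0 := by
    intro s
    let e : E ≃ₗ[R] E := LinearEquiv.ofBijective _ (key s)
    have hiso : IsIso (F.map e.toModuleIso.hom) := inferInstance
    have heq : e.toModuleIso.hom = ((s : R) • 𝟙 X : X ⟶ X) := rfl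
    rw [heq, F.map_smul, CategoryTheory.Functor.map_id] at hiso
    intro x hx
    have hinj : Function.Injective ((s : R) • 𝟙 (F.obj X) : F.obj X ⟶ F.obj X) := by
      have := (asIso ((s : R) • 𝟙 (F.obj X) : F.obj X ⟶ F.obj X)).toLinearEquiv.injective
      exact this
    apply hinj
    show (s : R) • x = (s : R) • (0 : (F.obj X).carrier)
    rw [smul_zero]; exact hx
  constructor
  intro a b
  have hall : ∀ x : (F.obj X).carrier, x = 0 := by
    intro x
    have : (LocalizedModule.mk x 1 : LocalizedModule p.asIdeal.primeCompl (F.obj X).carrier)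
        = LocalizedModule.mk 0 1 := Subsingleton.elim _ _
    obtain ⟨u, hu⟩ := LocalizedModule.mk_eq.mp this
    simp only [one_smul, smul_zero] at hu
    exact keyF u x hu
  rw [hall a, hall b]
end

section
/- Let R be a commutative noetherian local ring, M a finitely generated R-module, and s, t > 0 integers. If Ext_R^i(M, R) = 0 for all s ≤ i ≤ s + t, then there is an isomorphism Ext_R^s(M, M) ≅ Ext_R^s(Ω^t M, Ω^t M). -/
open CategoryTheory

universe u

open Limits Opposite

namespace ExtAux

variable {R : Type u} [CommRing R]

noncomputable abbrev extM (X Y : ModuleCat.{u} R) (n : ℕ) : ModuleCat.{u} R :=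
  ((Ext R (ModuleCat.{u} R) n).obj (op X)).obj Y

lemma subsingleton_of_isZero {M : ModuleCat.{u} R} (h : IsZero M) : Subsingleton M := by
  refine ⟨fun a b => ?_⟩
  have : (𝟙 M : M ⟶ M) = 0 := h.eq_of_src _ _
  calc a = (𝟙 M : M ⟶ M) a := rfl
  _ = (0 : M ⟶ M) a := by rw [this]
  _ = (𝟙 M : M ⟶ M) b := by rw [this]; rfl
  _ = b := rfl

/-- Transport `extM` along isomorphisms in both variables. -/
noncomputable def extMapIso {X X' Y Y' : ModuleCat.{u} R} (e : X ≅ X') (e' : Y ≅ Y') (n : ℕ) :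
    extM X Y n ≅ extM X' Y' n :=
  (((Ext R (ModuleCat.{u} R) n).mapIso e.symm.op).app Y) ≪≫
    ((Ext R (ModuleCat.{u} R) n).obj (op X')).mapIso e'

/-- Post-composition functoriality for `linearYonedaObj`. -/
noncomputable def lyMap (P : ChainComplex (ModuleCat.{u} R) ℕ) {Y Y' : ModuleCat.{u} R}
    (f : Y ⟶ Y') : P.linearYonedaObj R Y ⟶ P.linearYonedaObj R Y' where
  f i := ((linearYoneda R (ModuleCat.{u} R)).map f).app (op (P.X i))
  comm' i j _ := (((linearYoneda R (ModuleCat.{u} R)).map f).naturality (P.d j i).op).symm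






/-- Applying `Hom(P_i, -)` to a short exact sequence gives a short exact sequence,
when `P_i` is projective. -/
noncomputable def lySES (P : ChainComplex (ModuleCat.{u} R) ℕ)
    (S : ShortComplex (ModuleCat.{u} R)) :
    ShortComplex (CochainComplex (ModuleCat.{u} R) ℕ) :=
  ShortComplex.mk (lyMap P S.f) (lyMap P S.g) (by
    ext i (g : P.X i ⟶ S.X₁)
    change (g ≫ S.f) ≫ S.g = _
    rw [Category.assoc, S.zero, comp_zero]
    rfl)

lemma lySES_shortExact (P : ChainComplex (ModuleCat.{u} R) ℕ)
    [∀ n, Projective (P.X n)]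
    {S : ShortComplex (ModuleCat.{u} R)} (hS : S.ShortExact) :
    (lySES P S).ShortExact := by
  have hinj : Function.Injective S.f := hS.moduleCat_injective_f
  have := hS.2
  have := hS.3
  apply HomologicalComplex.shortExact_of_degreewise_shortExact
  intro i
  refine ShortComplex.ShortExact.mk' ?_ ?_ ?_
  · rw [ShortComplex.moduleCat_exact_iff]
    intro (x₂ : P.X i ⟶ S.X₂) hx₂
    have hker : ∀ p, S.g (x₂ p) = 0 := fun p => congrArg (fun h : P.X i ⟶ S.X₃ => h p) hx₂
    have hrange : ∀ p, x₂ p ∈ LinearMap.range S.f.hom := by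
      intro p
      rw [hS.exact.moduleCat_range_eq_ker]
      exact hker p
    let e := LinearEquiv.ofInjective S.f.hom hinj
    refine ⟨ModuleCat.ofHom (e.symm.toLinearMap ∘ₗ LinearMap.codRestrict _ x₂.hom hrange), ?_⟩
    show ModuleCat.ofHom _ ≫ S.f = x₂
    refine ModuleCat.hom_ext (LinearMap.ext fun p => ?_)
    change S.f (e.symm ⟨x₂ p, hrange p⟩) = x₂ p
    exact congrArg Subtype.val (e.apply_symm_apply ⟨x₂ p, hrange p⟩)
  · rw [ModuleCat.mono_iff_injective]
    intro (g₁ : P.X i ⟶ S.X₁) (g₂ : P.X i ⟶ S.X₁) h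
    exact ModuleCat.hom_ext (LinearMap.ext fun p => hinj (congrArg (fun h : P.X i ⟶ S.X₂ => h p) h))
  · rw [ModuleCat.epi_iff_surjective]
    intro (h : P.X i ⟶ S.X₃)
    exact ⟨Projective.factorThru h S.g, Projective.factorThru_comp h S.g⟩


section
variable {X : ModuleCat.{u} R}

lemma up_rel (i : ℕ) : (ComplexShape.up ℕ).Rel i (i+1) := by simp

/-- Dimension shift: if `Ext^i(X, S.X₂)` and `Ext^{i+1}(X, S.X₂)` vanish, the connecting map
gives an isomorphism `Ext^i(X, S.X₃) ≅ Ext^{i+1}(X, S.X₁)`. -/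
noncomputable def shiftIso (P : ProjectiveResolution X) {S : ShortComplex (ModuleCat.{u} R)} (hS : S.ShortExact) (i : ℕ)
    (h2 : Subsingleton (extM X S.X₂ i)) (h2' : Subsingleton (extM X S.X₂ (i+1))) :
    extM X S.X₃ i ≅ extM X S.X₁ (i+1) := by
  have hT := lySES_shortExact P.complex hS
  have hz : IsZero (((lySES P.complex S).X₂).homology i) := by
    haveI := h2
    exact (ModuleCat.isZero_of_subsingleton (extM X S.X₂ i)).of_iso (P.isoExt i S.X₂).symm
  have hz' : IsZero (((lySES P.complex S).X₂).homology (i+1)) := by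
    haveI := h2'
    exact (ModuleCat.isZero_of_subsingleton (extM X S.X₂ (i+1))).of_iso
      (P.isoExt (i+1) S.X₂).symm
  have hmono : Mono (hT.δ i (i+1) (up_rel i)) :=
    (hT.homology_exact₃ i (i+1) (up_rel i)).mono_g (hz.eq_of_src _ _)
  have hepi : Epi (hT.δ i (i+1) (up_rel i)) :=
    (hT.homology_exact₁ i (i+1) (up_rel i)).epi_f (hz'.eq_of_tgt _ _)
  have : IsIso (hT.δ i (i+1) (up_rel i)) := isIso_of_mono_of_epi _
  exact P.isoExt i S.X₃ ≪≫ @asIso _ _ _ _ (hT.δ i (i+1) (up_rel i)) this ≪≫ (P.isoExt (i+1) S.X₁).symm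

lemma subsingleton_extM_X₂ (P : ProjectiveResolution X) {S : ShortComplex (ModuleCat.{u} R)} (hS : S.ShortExact) (i : ℕ)
    (h1 : Subsingleton (extM X S.X₁ i)) (h3 : Subsingleton (extM X S.X₃ i)) :
    Subsingleton (extM X S.X₂ i) := by
  have hT := lySES_shortExact P.complex hS
  have hz1 : IsZero (((lySES P.complex S).X₁).homology i) := by
    haveI := h1
    exact (ModuleCat.isZero_of_subsingleton (extM X S.X₁ i)).of_iso (P.isoExt i S.X₁).symm
  have hz3 : IsZero (((lySES P.complex S).X₃).homology i) := by
    haveI := h3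
    exact (ModuleCat.isZero_of_subsingleton (extM X S.X₃ i)).of_iso (P.isoExt i S.X₃).symm
  have hz2 := (hT.homology_exact₂ i).isZero_X₂ (hz1.eq_of_src _ _) (hz3.eq_of_tgt _ _)
  exact subsingleton_of_isZero (hz2.of_iso (P.isoExt i S.X₂))

lemma subsingleton_extM_of_subsingleton (P : ProjectiveResolution X) (Y : ModuleCat.{u} R) [Subsingleton Y] (n : ℕ) :
    Subsingleton (extM X Y n) := by
  haveI : Subsingleton ((P.complex.linearYonedaObj R Y).X n) :=
    ⟨fun a b => ModuleCat.hom_ext (LinearMap.ext fun p => Subsingleton.elim _ _)⟩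
  have hex : (P.complex.linearYonedaObj R Y).ExactAt n :=
    ShortComplex.exact_of_isZero_X₂ _ (by
      show IsZero ((P.complex.linearYonedaObj R Y).X n)
      exact ModuleCat.isZero_of_subsingleton _)
  rw [HomologicalComplex.exactAt_iff_isZero_homology] at hex
  exact subsingleton_of_isZero (hex.of_iso (P.isoExt n Y))


/-- The short exact sequence `0 → R → R^{k+1} → R^k → 0` splitting off the last coordinate. -/
noncomputable def finSES (k : ℕ) : ShortComplex (ModuleCat.{u} R) :=
  ShortComplex.mk
    (X₁ := ModuleCat.of R R) (X₂ := ModuleCat.of R (Fin (k+1) → R))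
    (X₃ := ModuleCat.of R (Fin k → R))
    (ModuleCat.ofHom (LinearMap.single R (fun _ : Fin (k+1) => R) (Fin.last k)))
    (ModuleCat.ofHom (LinearMap.funLeft R R (Fin.castSucc : Fin k → Fin (k+1))))
    (by
      refine ModuleCat.hom_ext (LinearMap.ext fun r => funext fun j => ?_)
      show Pi.single (M := fun _ : Fin (k+1) => R) (Fin.last k) r (Fin.castSucc j) = 0
      exact Pi.single_eq_of_ne (M := fun _ : Fin (k+1) => R) (Fin.castSucc_lt_last j).ne r)

lemma finSES_shortExact (k : ℕ) : (finSES (R := R) k).ShortExact := by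
  refine ShortComplex.ShortExact.mk' ?_ ?_ ?_
  · rw [ShortComplex.moduleCat_exact_iff]
    intro (x₂ : Fin (k+1) → R) hx₂
    have h0 : ∀ j : Fin k, x₂ (Fin.castSucc j) = 0 := fun j => congrFun hx₂ j
    refine ⟨x₂ (Fin.last k), funext fun j => ?_⟩
    show Pi.single (M := fun _ : Fin (k+1) => R) (Fin.last k) (x₂ (Fin.last k)) j = x₂ j
    induction j using Fin.lastCases with
    | last => rw [Pi.single_eq_same]
    | cast i =>
      rw [h0 i]
      exact Pi.single_eq_of_ne (M := fun _ : Fin (k+1) => R) (Fin.castSucc_lt_last i).ne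
        (x₂ (Fin.last k))
  · rw [ModuleCat.mono_iff_injective]
    intro a b h
    have h' := congrFun h (Fin.last k)
    change Pi.single (M := fun _ : Fin (k+1) => R) (Fin.last k) a (Fin.last k) =
      Pi.single (M := fun _ : Fin (k+1) => R) (Fin.last k) b (Fin.last k) at h'
    exact (Pi.single_eq_same (M := fun _ : Fin (k+1) => R) _ _).symm.trans
      (h'.trans (Pi.single_eq_same (M := fun _ : Fin (k+1) => R) _ _))
  · rw [ModuleCat.epi_iff_surjective]
    intro y
    refine ⟨Fin.snoc (α := fun _ : Fin (k+1) => R) y 0, funext fun j => ?_⟩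
    show Fin.snoc (α := fun _ : Fin (k+1) => R) y 0 (Fin.castSucc j) = y j
    exact Fin.snoc_castSucc (α := fun _ : Fin (k+1) => R) ..

lemma subsingleton_extM_free {X : ModuleCat.{u} R} (P : ProjectiveResolution X) (i k : ℕ)
    (h : Subsingleton (extM X (ModuleCat.of R R) i)) :
    Subsingleton (extM X (ModuleCat.of R (Fin k → R)) i) := by
  induction k with
  | zero => exact subsingleton_extM_of_subsingleton P _ i
  | succ k ih => exact subsingleton_extM_X₂ P (finSES_shortExact k) i h ih


end

section splice

variable {S : ShortComplex (ModuleCat.{u} R)} (Q : ProjectiveResolution S.X₁)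

/-- The augmentation `Q.X 0 ⟶ S.X₁` of a projective resolution. -/
noncomputable def aug : Q.complex.X 0 ⟶ S.X₁ :=
  Q.π.f 0 ≫ (HomologicalComplex.singleObjXSelf (ComplexShape.down ℕ) 0 S.X₁).hom

instance : Epi (aug Q) := by
  unfold aug
  infer_instance

lemma d_comp_aug : Q.complex.d 1 0 ≫ aug Q = 0 := by
  unfold aug
  rw [← Category.assoc, Q.complex_d_comp_π_f_zero, zero_comp]

lemma exact_aug : (ShortComplex.mk (Q.complex.d 1 0) (aug Q) (d_comp_aug Q)).Exact := by
  refine (ShortComplex.exact_iff_of_iso ?_).2 Q.exact₀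
  exact ShortComplex.isoMk (Iso.refl _) (Iso.refl _)
    (HomologicalComplex.singleObjXSelf (ComplexShape.down ℕ) 0 S.X₁) (by simp) (by simp [aug]; exact (Category.id_comp _).trans (Category.comp_id _).symm)

/-- Objects of the spliced resolution. -/
noncomputable def splicedX : ℕ → ModuleCat.{u} R
  | 0 => S.X₂
  | (n+1) => Q.complex.X n

/-- Differentials of the spliced resolution. -/
noncomputable def splicedD (f : S.X₁ ⟶ S.X₂) :
    ∀ n : ℕ, splicedX Q (n+1) ⟶ splicedX Q n
  | 0 => aug Q ≫ f
  | (n+1) => Q.complex.d (n+1) n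

/-- The spliced chain complex `⋯ → Q.X 1 → Q.X 0 → S.X₂`. -/
noncomputable def splicedC : ChainComplex (ModuleCat.{u} R) ℕ :=
  ChainComplex.of (splicedX Q) (splicedD Q S.f) (by
    rintro (_ | n)
    · show Q.complex.d 1 0 ≫ aug Q ≫ S.f = 0
      rw [← Category.assoc, d_comp_aug, zero_comp]
    · exact Q.complex.d_comp_d _ _ _)

lemma splicedC_d_one_zero : (splicedC Q).d 1 0 = aug Q ≫ S.f :=
  ChainComplex.of_d (splicedX Q) (splicedD Q S.f) 0

lemma splicedC_d_succ (n : ℕ) : (splicedC Q).d (n+2) (n+1) = Q.complex.d (n+1) n :=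
  ChainComplex.of_d (splicedX Q) (splicedD Q S.f) (n+1)

/-- The augmentation of the spliced complex. -/
noncomputable def splicedπ : splicedC Q ⟶ (ChainComplex.single₀ (ModuleCat.{u} R)).obj S.X₃ :=
  (ChainComplex.toSingle₀Equiv _ _).symm ⟨S.g, by
    show (aug Q ≫ S.f) ≫ S.g = 0
    rw [Category.assoc, S.zero, comp_zero]⟩

lemma splicedπ_f_zero : (splicedπ Q).f 0 = S.g :=
  ChainComplex.toSingle₀Equiv_symm_apply_f_zero _ _

/-- The spliced projective resolution of `S.X₃`. -/
noncomputable def spliced (hS : S.ShortExact) [Projective S.X₂] :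
    ProjectiveResolution S.X₃ where
  complex := splicedC Q
  projective n := by
    cases n with
    | zero => exact (inferInstance : Projective S.X₂)
    | succ n => exact (inferInstance : Projective (Q.complex.X n))
  π := splicedπ Q
  quasiIso := ⟨fun n => by
    have hinj : Function.Injective S.f := hS.moduleCat_injective_f
    have haug : Function.Surjective (aug Q) :=
      (ModuleCat.epi_iff_surjective (aug Q)).1 inferInstance
    cases n with
    | zero =>
      rw [ChainComplex.quasiIsoAt₀_iff, ShortComplex.quasiIso_iff_of_zeros']
      · constructor
        · rw [ShortComplex.moduleCat_exact_iff]
          intro (x : S.X₂) hx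
          have hx' : S.g x = 0 := by
            rw [← splicedπ_f_zero Q]; exact hx
          have hmem : x ∈ LinearMap.range S.f.hom := by
            rw [hS.exact.moduleCat_range_eq_ker]; exact hx'
          obtain ⟨a, ha⟩ := hmem
          obtain ⟨z, hz⟩ := haug a
          refine ⟨z, ?_⟩
          show ((splicedC Q).d 1 0) z = x
          rw [splicedC_d_one_zero]
          show S.f (aug Q z) = x
          rw [hz, ha]
        · show Epi ((splicedπ Q).f 0)
          rw [splicedπ_f_zero]
          exact hS.epi_g
      all_goals rfl
    | succ n =>
      rw [quasiIsoAt_iff_exactAt']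
      · cases n with
        | zero =>
          rw [HomologicalComplex.exactAt_iff' _ 2 1 0 (by simp) (by simp),
            ShortComplex.moduleCat_exact_iff]
          intro (x : Q.complex.X 0) hx
          have hx' : S.f (aug Q x) = 0 := by
            have hg : (HomologicalComplex.sc' (splicedC Q) 2 1 0).g
                = (splicedC Q).d 1 0 := rfl
            rw [hg, splicedC_d_one_zero Q] at hx
            exact hx
          have h0 : aug Q x = 0 := by
            refine hinj ?_
            rw [map_zero]
            exact hx'
          have hmem : x ∈ LinearMap.range (Q.complex.d 1 0).hom := by
            rw [(exact_aug Q).moduleCat_range_eq_ker]; exact h0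
          obtain ⟨y, hy⟩ := hmem
          refine ⟨y, ?_⟩
          have hf : (HomologicalComplex.sc' (splicedC Q) 2 1 0).f
              = (splicedC Q).d 2 1 := rfl
          rw [hf, splicedC_d_succ]
          exact hy
        | succ m =>
          rw [HomologicalComplex.exactAt_iff' _ (m+3) (m+2) (m+1) (by simp) (by simp),
            ShortComplex.moduleCat_exact_iff]
          intro x hx
          have hg : (HomologicalComplex.sc' (splicedC Q) (m+3) (m+2) (m+1)).g
              = (splicedC Q).d (m+2) (m+1) := rfl
          rw [hg, splicedC_d_succ Q m] at hx
          obtain ⟨y, hy⟩ := (ShortComplex.moduleCat_exact_iff _).1 (Q.exact_succ m) x hx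
          refine ⟨y, ?_⟩
          have hf : (HomologicalComplex.sc' (splicedC Q) (m+3) (m+2) (m+1)).f
              = (splicedC Q).d (m+3) (m+2) := rfl
          rw [hf, splicedC_d_succ Q (m+1)]
          exact hy
      · exact ChainComplex.exactAt_succ_single_obj _ _⟩

/-- First-variable dimension shift via the spliced resolution:
`Ext^{m+2}(S.X₃, Y) ≅ Ext^{m+1}(S.X₁, Y)`. -/
noncomputable def firstShiftIso (hS : S.ShortExact) [Projective S.X₂]
    (Y : ModuleCat.{u} R) (m : ℕ) :
    extM S.X₃ Y (m+2) ≅ extM S.X₁ Y (m+1) := by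
  refine (spliced Q hS).isoExt (m+2) Y ≪≫ ?_ ≪≫ (Q.isoExt (m+1) Y).symm
  show ((splicedC Q).linearYonedaObj R Y).homology (m+2) ≅
    (Q.complex.linearYonedaObj R Y).homology (m+1)
  refine ShortComplex.homologyMapIso
    (((splicedC Q).linearYonedaObj R Y).isoSc' (m+1) (m+2) (m+3) (by simp) (by simp) ≪≫
      ?_ ≪≫ ((Q.complex.linearYonedaObj R Y).isoSc' m (m+1) (m+2) (by simp) (by simp)).symm)
  refine ShortComplex.isoMk (Iso.refl _) (Iso.refl _) (Iso.refl _) ?_ ?_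
  · show 𝟙 _ ≫ (HomologicalComplex.sc' (Q.complex.linearYonedaObj R Y) m (m+1) (m+2)).f =
      (HomologicalComplex.sc' ((splicedC Q).linearYonedaObj R Y) (m+1) (m+2) (m+3)).f ≫ 𝟙 _
    rw [Category.id_comp, Category.comp_id]
    have h1 : (HomologicalComplex.sc' (Q.complex.linearYonedaObj R Y) m (m+1) (m+2)).f
        = (Q.complex.linearYonedaObj R Y).d m (m+1) := rfl
    have h2 : (HomologicalComplex.sc' ((splicedC Q).linearYonedaObj R Y) (m+1) (m+2) (m+3)).f
        = ((splicedC Q).linearYonedaObj R Y).d (m+1) (m+2) := rfl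
    rw [h1, h2, ChainComplex.linearYonedaObj_d, ChainComplex.linearYonedaObj_d,
      splicedC_d_succ]
    rfl
  · show 𝟙 _ ≫ (HomologicalComplex.sc' (Q.complex.linearYonedaObj R Y) m (m+1) (m+2)).g =
      (HomologicalComplex.sc' ((splicedC Q).linearYonedaObj R Y) (m+1) (m+2) (m+3)).g ≫ 𝟙 _
    rw [Category.id_comp, Category.comp_id]
    have h1 : (HomologicalComplex.sc' (Q.complex.linearYonedaObj R Y) m (m+1) (m+2)).g
        = (Q.complex.linearYonedaObj R Y).d (m+1) (m+2) := rfl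
    have h2 : (HomologicalComplex.sc' ((splicedC Q).linearYonedaObj R Y) (m+1) (m+2) (m+3)).g
        = ((splicedC Q).linearYonedaObj R Y).d (m+2) (m+3) := rfl
    rw [h1, h2, ChainComplex.linearYonedaObj_d, ChainComplex.linearYonedaObj_d,
      splicedC_d_succ]
    rfl

end splice

section main

/-- The short exact sequence `0 → ker f → R^k → M → 0`. -/
noncomputable def kerSES {M : Type u} [AddCommGroup M] [Module R M] {k : ℕ}
    (f : (Fin k → R) →ₗ[R] M) : ShortComplex (ModuleCat.{u} R) :=
  ShortComplex.mk (X₁ := ModuleCat.of R (LinearMap.ker f))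
    (X₂ := ModuleCat.of R (Fin k → R)) (X₃ := ModuleCat.of R M)
    (ModuleCat.ofHom (LinearMap.ker f).subtype) (ModuleCat.ofHom f)
      (by exact ModuleCat.hom_ext (LinearMap.ext fun x => x.2))

lemma kerSES_shortExact {M : Type u} [AddCommGroup M] [Module R M] {k : ℕ}
    (f : (Fin k → R) →ₗ[R] M) (hf : Function.Surjective f) :
    (kerSES f).ShortExact := by
  refine ShortComplex.ShortExact.mk' ?_ ?_ ?_
  · rw [ShortComplex.moduleCat_exact_iff]
    intro (x₂ : Fin k → R) hx₂
    exact ⟨⟨x₂, hx₂⟩, rfl⟩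
  · rw [ModuleCat.mono_iff_injective]
    exact Subtype.val_injective
  · rw [ModuleCat.epi_iff_surjective]
    exact hf

instance {k : ℕ} : Projective (ModuleCat.of R (Fin k → R)) :=
  (IsProjective.iff_projective (Fin k → R)).mp inferInstance

lemma key (t : ℕ) :
    ∀ (M : Type u) [AddCommGroup M] [Module R M] (s : ℕ), 0 < s →
      (∀ i : ℕ, s ≤ i → i ≤ s + t → Subsingleton (extGroup R i M R)) →
      ∀ (N : Type u) [AddCommGroup N] [Module R N], IsSyzygy R N t M →
      Nonempty (extGroup R s M M ≃ₗ[R] extGroup R s N N) := by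
  induction t with
  | zero =>
    intro M _ _ s _ _ N _ _ hsyz
    obtain ⟨e⟩ := hsyz
    exact ⟨(extMapIso e.toModuleIso.symm e.toModuleIso.symm s).toLinearEquiv⟩
  | succ t ih =>
    intro M _ _ s hs hext N _ _ hsyz
    obtain ⟨k, f, hf, hN⟩ := hsyz
    have hS := kerSES_shortExact f hf
    haveI : Projective (kerSES f).X₂ :=
      (inferInstance : Projective (ModuleCat.of R (Fin k → R)))
    let P : ProjectiveResolution (ModuleCat.of R M) := ProjectiveResolution.of _
    let Q : ProjectiveResolution (ModuleCat.of R (LinearMap.ker f)) :=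
      ProjectiveResolution.of _
    have hfree : ∀ i, s ≤ i → i ≤ s + (t+1) →
        Subsingleton (extM (ModuleCat.of R M) (ModuleCat.of R (Fin k → R)) i) :=
      fun i h1 h2 => subsingleton_extM_free P i k (hext i h1 h2)
    have hA := shiftIso P hS s (hfree s le_rfl (by omega)) (hfree (s+1) (by omega) (by omega))
    obtain ⟨m, rfl⟩ : ∃ m, s = m + 1 := ⟨s-1, by omega⟩
    have hB := firstShiftIso Q hS (ModuleCat.of R (LinearMap.ker f)) m
    have hextK : ∀ i, m+1 ≤ i → i ≤ (m+1) + t →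
        Subsingleton (extGroup R i (LinearMap.ker f) R) := by
      intro i h1 h2
      obtain ⟨j, rfl⟩ : ∃ j, i = j + 1 := ⟨i-1, by omega⟩
      have e := firstShiftIso Q hS (ModuleCat.of R R) j
      exact @Equiv.subsingleton _ _ e.symm.toLinearEquiv.toEquiv
        (hext (j+2) (by omega) (by omega))
    obtain ⟨eIH⟩ := ih (LinearMap.ker f) (m+1) hs hextK N hN
    exact ⟨((hA ≪≫ hB).toLinearEquiv).trans eIH⟩

end main
end ExtAux

/-- Over a noetherian local ring `R`, if `Ext^i(M, R) = 0` for all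
`s ≤ i ≤ s + t` (with `s, t > 0`), then `Ext^s(M, M) ≅ Ext^s(Ωᵗ M, Ωᵗ M)`. -/
theorem ext_self_iso_ext_syzygy_self
    (R : Type u) [CommRing R] [IsNoetherianRing R] [IsLocalRing R]
    (M : Type u) [AddCommGroup M] [Module R M] [Module.Finite R M]
    (s t : ℕ) (hs : 0 < s) (ht : 0 < t)
    (hext : ∀ i : ℕ, s ≤ i → i ≤ s + t → Subsingleton (extGroup R i M R)) :
    ∀ (N : Type u) [AddCommGroup N] [Module R N], IsSyzygy R N t M →
      Nonempty (extGroup R s M M ≃ₗ[R] extGroup R s N N) := by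
  intro N _ _ hsyz
  exact ExtAux.key t M s hs hext N hsyz
end
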